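/- Let $a : \mathbb{N} \to \mathbb{N}$ be a sequence of positive integers (each $a_j \geq 1$), and set $s_n = a_1 + \cdots + a_n$. If $\limsup_{n \to \infty} \frac{s_n}{n} = \infty$, then $$\liminf_{n \to \infty} \frac{\prod_{j=1}^{n}(2a_j + 1)^3}{3^{s_n}} = 0.$$ -/

import Mathlib

open Filter

private lemma key_nat (n : ℕ) : (2 * n + 1) ^ 3 ≤ 64 * 2 ^ n := by
  induction n with
  | zero => norm_num
  | succ m ih =>
    rcases lt_or_ge m 4 with h | h
    · interval_cases m <;> norm_num
    · obtain ⟨p, rfl⟩ : ∃ p, m = p + 4 := ⟨m - 4, by omega⟩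
      have h2 : (2 * (p + 4 + 1) + 1) ^ 3 ≤ 2 * (2 * (p + 4) + 1) ^ 3 := by
        have e1 : (2 * (p + 4 + 1) + 1) ^ 3
            = 8 * p ^ 3 + 132 * p ^ 2 + 726 * p + 1331 := by ring
        have e2 : 2 * (2 * (p + 4) + 1) ^ 3
            = 16 * p ^ 3 + 216 * p ^ 2 + 972 * p + 1458 := by ring
        rw [e1, e2]
        have h3 := Nat.zero_le (p ^ 3)
        have h4 := Nat.zero_le (p ^ 2)
        have h5 := Nat.zero_le p
        linarith
      calc (2 * (p + 4 + 1) + 1) ^ 3 ≤ 2 * (2 * (p + 4) + 1) ^ 3 := h2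
        _ ≤ 2 * (64 * 2 ^ (p + 4)) := Nat.mul_le_mul_left 2 ih
        _ = 64 * 2 ^ (p + 4 + 1) := by rw [pow_succ]; ring

private lemma key_real (n : ℕ) : (2 * (n : ℝ) + 1) ^ 3 ≤ 64 * 2 ^ n := by
  have := key_nat n
  exact_mod_cast this

theorem liminf_ratio_zero (a : ℕ → ℕ) (ha : ∀ j, 1 ≤ a j)
    (s : ℕ → ℕ) (hs : ∀ n, s n = ∑ j ∈ Finset.range n, a j)
    (hlimsup : limsup (fun n : ℕ => (((s n : ℝ) / (n : ℝ) : ℝ) : EReal)) atTop = ⊤) :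
    liminf (fun n : ℕ =>
      (∏ j ∈ Finset.range n, (2 * (a j : ℝ) + 1) ^ 3) / 3 ^ (s n)) atTop = 0 := by
  set u : ℕ → ℝ := fun n =>
    (∏ j ∈ Finset.range n, (2 * (a j : ℝ) + 1) ^ 3) / 3 ^ (s n) with hu
  have hpos : ∀ n, 0 ≤ u n := by
    intro n
    apply div_nonneg
    · exact Finset.prod_nonneg fun j _ => by positivity
    · positivity
  have hub : ∀ n, u n ≤ 64 ^ n * (2 / 3) ^ (s n) := by
    intro n
    have h1 : ∏ j ∈ Finset.range n, (2 * (a j : ℝ) + 1) ^ 3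
        ≤ ∏ j ∈ Finset.range n, (64 : ℝ) * 2 ^ (a j) :=
      Finset.prod_le_prod (fun j _ => by positivity) (fun j _ => key_real (a j))
    have h2 : ∏ j ∈ Finset.range n, (64 : ℝ) * 2 ^ (a j) = 64 ^ n * 2 ^ (s n) := by
      rw [Finset.prod_mul_distrib, Finset.prod_const, Finset.card_range,
        Finset.prod_pow_eq_pow_sum, hs n]
    have h3 : (0 : ℝ) < 3 ^ (s n) := by positivity
    rw [hu, div_le_iff₀ h3]
    calc ∏ j ∈ Finset.range n, (2 * (a j : ℝ) + 1) ^ 3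
        ≤ 64 ^ n * 2 ^ (s n) := h1.trans (le_of_eq h2)
      _ = 64 ^ n * (2 / 3) ^ (s n) * 3 ^ (s n) := by
          rw [div_pow]; field_simp
  -- auxiliary: for every ε > 0, frequently u n ≤ ε
  have hfreq : ∀ ε : ℝ, 0 < ε → ∃ᶠ n in atTop, u n ≤ ε := by
    intro ε hε
    obtain ⟨k, hk⟩ := exists_pow_lt_of_lt_one
      (show (0 : ℝ) < min ε 1 / 64 by positivity) (by norm_num : (2 : ℝ) / 3 < 1)
    have hlt : ((k : ℝ) : EReal) < limsup
        (fun n : ℕ => (((s n : ℝ) / (n : ℝ) : ℝ) : EReal)) atTop := by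
      rw [hlimsup]; exact EReal.coe_lt_top _
    have hf : ∃ᶠ n in atTop, ((k : ℝ) : EReal) < (((s n : ℝ) / (n : ℝ) : ℝ) : EReal) :=
      frequently_lt_of_lt_limsup (by isBoundedDefault) hlt
    refine (hf.and_eventually (eventually_ge_atTop 1)).mono ?_
    rintro n ⟨hlt', hn1⟩
    have hc : (k : ℝ) < (s n : ℝ) / (n : ℝ) := by exact_mod_cast hlt'
    have hn0 : (0 : ℝ) < (n : ℝ) := by exact_mod_cast hn1
    have hkn : (k : ℝ) * n < (s n : ℝ) := (lt_div_iff₀ hn0).mp hc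
    have hkn' : k * n ≤ s n := by exact_mod_cast hkn.le
    have hmin : 0 < min ε 1 := lt_min hε one_pos
    have step1 : ((2 : ℝ) / 3) ^ (s n) ≤ ((2 : ℝ) / 3) ^ (k * n) :=
      pow_le_pow_of_le_one (by norm_num) (by norm_num) hkn'
    have step2 : u n ≤ (64 * ((2 : ℝ) / 3) ^ k) ^ n := by
      calc u n ≤ 64 ^ n * (2 / 3) ^ (s n) := hub n
        _ ≤ 64 ^ n * (2 / 3) ^ (k * n) := by
            exact mul_le_mul_of_nonneg_left step1 (by positivity)
        _ = (64 * ((2 : ℝ) / 3) ^ k) ^ n := by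
            rw [mul_pow, pow_mul]
    have step3 : (64 : ℝ) * (2 / 3) ^ k ≤ min ε 1 := by
      have := hk
      nlinarith [this]
    have step4 : (64 * ((2 : ℝ) / 3) ^ k) ^ n ≤ (min ε 1) ^ n :=
      pow_le_pow_left₀ (by positivity) step3 n
    have step5 : (min ε 1) ^ n ≤ min ε 1 := by
      calc (min ε 1) ^ n ≤ (min ε 1) ^ 1 :=
        pow_le_pow_of_le_one hmin.le (min_le_right _ _) hn1
        _ = min ε 1 := pow_one _
    exact ((step2.trans step4).trans step5).trans (min_le_left _ _)
  have hbdd : atTop.IsBoundedUnder (· ≥ ·) u := isBoundedUnder_of ⟨0, hpos⟩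
  have hcob : atTop.IsCoboundedUnder (· ≥ ·) u :=
    Filter.IsCoboundedUnder.of_frequently_le (hfreq 1 one_pos)
  refine le_antisymm ?_ (le_liminf_of_le hcob (Eventually.of_forall hpos))
  have : ∀ ε : ℝ, 0 < ε → liminf u atTop ≤ ε := fun ε hε =>
    liminf_le_of_frequently_le (hfreq ε hε) hbdd
  have h0 : liminf u atTop ≤ 0 := by
    by_contra h
    push_neg at h
    exact absurd (this _ (half_pos h)) (by linarith)
  exact h0
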